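/- arXiv:2102.12201 — 4 statements merged into one kernel-verified Lean document; each statement's English description precedes it below -/
import Mathlib

section
/- Let G be a finite graph, let X ⊆ V(G) be a nonempty set of vertices, and let r ≥ 1. Then there exist a subset Z ⊆ X and a natural number i with 0 ≤ i ≤ |X| − 1 such that, setting R = 3^i · r: (i) N_R(z) ∩ N_R(z') = ∅ for all distinct z, z' ∈ Z, and (ii) N_r(X) ⊆ N_R(Z). -/
/-- The (closed) `ρ`-neighbourhood (ball) of a vertex `v` in a graph `G`:
all vertices at distance at most `ρ` from `v` (distance is `∞` if there is no path). -/
def nbhd {V : Type} (G : SimpleGraph V) (ρ : ℕ) (v : V) : Set V :=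
  {u : V | G.edist u v ≤ (ρ : ℕ∞)}

/-- The (closed) `ρ`-neighbourhood of a set `S` of vertices. -/
def nbhdSet {V : Type} (G : SimpleGraph V) (ρ : ℕ) (S : Set V) : Set V :=
  {u : V | ∃ s ∈ S, G.edist u s ≤ (ρ : ℕ∞)}

lemma aux_stmt0 {V : Type} [Fintype V] [DecidableEq V] (G : SimpleGraph V) :
    ∀ n (X : Finset V), X.card ≤ n → X.Nonempty → ∀ r : ℕ, 1 ≤ r →
    ∃ (Z : Finset V) (i : ℕ), Z ⊆ X ∧ i ≤ X.card - 1 ∧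
      (∀ z ∈ Z, ∀ z' ∈ Z, z ≠ z' →
        nbhd G (3 ^ i * r) z ∩ nbhd G (3 ^ i * r) z' = ∅) ∧
      nbhdSet G r (X : Set V) ⊆ nbhdSet G (3 ^ i * r) (Z : Set V) := by
  intro n
  induction n with
  | zero =>
    intro X hc hne r hr
    exact absurd (Finset.card_pos.mpr hne) (by omega)
  | succ n ih =>
    intro X hc hne r hr
    by_cases h : ∀ z ∈ X, ∀ z' ∈ X, z ≠ z' → nbhd G r z ∩ nbhd G r z' = ∅
    · refine ⟨X, 0, subset_rfl, Nat.zero_le _, ?_, ?_⟩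
      · simpa using h
      · intro u hu
        simpa using hu
    · push_neg at h
      obtain ⟨z, hz, z', hz', hzz', hint⟩ := h
      obtain ⟨w, hw1, hw2⟩ := hint
      have hw1' : G.edist w z ≤ (r : ℕ∞) := hw1
      have hw2' : G.edist w z' ≤ (r : ℕ∞) := hw2
      have hzE : z ∈ X.erase z' := Finset.mem_erase.mpr ⟨hzz', hz⟩
      have hcard : (X.erase z').card = X.card - 1 := Finset.card_erase_of_mem hz'
      have hXpos : 1 ≤ X.card := Finset.card_pos.mpr hne
      have hEpos : 1 ≤ (X.erase z').card := Finset.card_pos.mpr ⟨z, hzE⟩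
      have hEle : (X.erase z').card ≤ n := by omega
      obtain ⟨Z, i, hZ, hi, hdisj, hsub⟩ :=
        ih (X.erase z') hEle ⟨z, hzE⟩ (3 * r) (by omega)
      have epow : 3 ^ (i + 1) * r = 3 ^ i * (3 * r) := by ring
      refine ⟨Z, i + 1, hZ.trans (Finset.erase_subset _ _), by omega, ?_, ?_⟩
      · rw [epow]; exact hdisj
      · intro u hu
        obtain ⟨s, hs, hus⟩ := hu
        have key : u ∈ nbhdSet G (3 * r) ((X.erase z') : Set V) := by
          by_cases hsz : s = z'
          · refine ⟨z, by exact_mod_cast hzE, ?_⟩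
            have h1 : G.edist u z' ≤ (r : ℕ∞) := hsz ▸ hus
            calc G.edist u z ≤ G.edist u z' + G.edist z' z := G.edist_triangle
              _ ≤ G.edist u z' + (G.edist z' w + G.edist w z) := by
                  gcongr; exact G.edist_triangle
              _ ≤ (r : ℕ∞) + ((r : ℕ∞) + (r : ℕ∞)) := by
                  gcongr
                  rw [G.edist_comm]; exact hw2'
              _ = ((3 * r : ℕ) : ℕ∞) := by push_cast; ring
          · refine ⟨s, ?_, hus.trans ?_⟩
            · exact_mod_cast Finset.mem_erase.mpr ⟨hsz, hs⟩
            · exact Nat.cast_le.mpr (Nat.le_mul_of_pos_left r (by norm_num))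
        have := hsub key
        rwa [epow]

/-- For every finite graph `G`, nonempty vertex set `X` and radius `r ≥ 1`,
there are `Z ⊆ X` and `0 ≤ i ≤ |X| - 1` such that, with `R = 3^i·r`, the `R`-balls around
distinct elements of `Z` are disjoint, and `N_r(X) ⊆ N_R(Z)`. -/
theorem stmt_0 {V : Type} [Fintype V] [DecidableEq V] (G : SimpleGraph V)
    (X : Finset V) (hX : X.Nonempty) (r : ℕ) (hr : 1 ≤ r) :
    ∃ (Z : Finset V) (i : ℕ), Z ⊆ X ∧ i ≤ X.card - 1 ∧
      (∀ z ∈ Z, ∀ z' ∈ Z, z ≠ z' →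
        nbhd G (3 ^ i * r) z ∩ nbhd G (3 ^ i * r) z' = ∅) ∧
      nbhdSet G r (X : Set V) ⊆ nbhdSet G (3 ^ i * r) (Z : Set V) :=
  aux_stmt0 G X.card X le_rfl hX r hr
end

section
/- Let G be a finite graph, let k, ℓ, s ≥ 1 be integers, let r ≥ 0, let ε > 0 be a real number, and let Γ be a nonempty finite set of k-tuples of vertices of G. For u ∈ V(G), let Γ(u) = {v̄ ∈ Γ : dist_G(u, v̄) ≤ 2r+1}. Then there exists a set X ⊆ V(G) with |X| ≤ k·ℓ·s/ε such that |Γ(u)| < (ε/(ℓ·s))·|Γ| for every vertex u ∈ V(G) ∖ N_{4r+2}(X). -/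
/-- The set `Γ(u)` of `k`-tuples in `Γ` at distance at most `2r+1` from `u`
(distance from `u` to a tuple is the minimum over its entries, `∞` if unreachable). -/
def affectedTuples {V : Type} (G : SimpleGraph V) (r : ℕ) {k : ℕ}
    (Γ : Finset (Fin k → V)) (u : V) : Set (Fin k → V) :=
  {vb : Fin k → V | vb ∈ Γ ∧ ∃ i, G.edist u (vb i) ≤ ((2 * r + 1 : ℕ) : ℕ∞)}

/-- For every finite graph `G`, integers `k, ℓ, s ≥ 1`, radius `r ≥ 0`,
real `ε > 0` and nonempty finite set `Γ` of `k`-tuples of vertices, there is a set `X` of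
at most `k·ℓ·s/ε` vertices such that every vertex `u` outside the `(4r+2)`-neighbourhood
of `X` satisfies `|Γ(u)| < (ε/(ℓ·s))·|Γ|`. -/
theorem stmt_5 {V : Type} [Fintype V] [DecidableEq V] (G : SimpleGraph V)
    (k l s r : ℕ) (hk : 1 ≤ k) (hl : 1 ≤ l) (hs : 1 ≤ s)
    (ε : ℝ) (hε : 0 < ε)
    (Γ : Finset (Fin k → V)) (hΓ : Γ.Nonempty) :
    ∃ X : Finset V, (X.card : ℝ) ≤ (k : ℝ) * l * s / ε ∧
      ∀ u : V, (∀ x ∈ X, ¬ G.edist u x ≤ ((4 * r + 2 : ℕ) : ℕ∞)) →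
        ((affectedTuples G r Γ u).ncard : ℝ) < ε / ((l : ℝ) * s) * Γ.card := by
  classical
  have hΓpos : (0:ℝ) < Γ.card := by exact_mod_cast Finset.card_pos.mpr hΓ
  have hls : (0:ℝ) < (l : ℝ) * s := by
    have : (0:ℝ) < (l:ℝ) := by exact_mod_cast hl
    have : (0:ℝ) < (s:ℝ) := by exact_mod_cast hs
    positivity
  set t : ℝ := ε / ((l : ℝ) * s) * Γ.card with ht
  set φ : V → (Fin k → V) → Prop :=
    fun u vb => ∃ i, G.edist u (vb i) ≤ ((2 * r + 1 : ℕ) : ℕ∞) with hφ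
  set A : V → Finset (Fin k → V) := fun u => Γ.filter (φ u) with hAdef
  have hA : ∀ u, (affectedTuples G r Γ u).ncard = (A u).card := by
    intro u
    have h : affectedTuples G r Γ u = ↑(A u) := by
      ext vb; simp [affectedTuples, hAdef, hφ]
    rw [h, Set.ncard_coe_finset]
  set P : Finset V → Prop := fun X => (∀ u ∈ X, t ≤ ((A u).card : ℝ)) ∧
    ∀ u ∈ X, ∀ u' ∈ X, u ≠ u' → ¬ G.edist u u' ≤ ((4 * r + 2 : ℕ) : ℕ∞) with hPdef
  have hP0 : P ∅ := ⟨by simp, by simp⟩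
  obtain ⟨X, hXmem, hmax⟩ := Finset.exists_max_image
    (Finset.univ.powerset.filter P) Finset.card
    ⟨∅, Finset.mem_filter.mpr ⟨Finset.mem_powerset.mpr (Finset.empty_subset _), hP0⟩⟩
  have hPX : P X := (Finset.mem_filter.mp hXmem).2
  -- key cast fact
  have hcast : ((2 * r + 1 : ℕ) : ℕ∞) + ((2 * r + 1 : ℕ) : ℕ∞) = ((4 * r + 2 : ℕ) : ℕ∞) := by
    push_cast; ring
  refine ⟨X, ?_, ?_⟩
  · -- cardinality bound
    have hsum_nat : ∑ u ∈ X, (A u).card ≤ Γ.card * k := by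
      have step : ∀ vb ∈ Γ, (X.filter (fun u => φ u vb)).card ≤ k := by
        intro vb _
        set f : V → Fin k := fun u => if h : φ u vb then h.choose else ⟨0, hk⟩ with hf
        have hspec : ∀ u ∈ X.filter (fun u => φ u vb),
            G.edist u (vb (f u)) ≤ ((2 * r + 1 : ℕ) : ℕ∞) := by
          intro u hu
          have hu' : φ u vb := (Finset.mem_filter.mp hu).2
          simp only [hf, dif_pos hu']
          exact hu'.choose_spec
        have hinj : Set.InjOn f (X.filter (fun u => φ u vb)) := by
          intro u hu u' hu' heq
          by_contra hne
          have h1 := hspec u hu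
          have h2 := hspec u' hu'
          rw [heq] at h1
          have htri : G.edist u u' ≤ ((4 * r + 2 : ℕ) : ℕ∞) := by
            calc G.edist u u' ≤ G.edist u (vb (f u')) + G.edist (vb (f u')) u' :=
                  SimpleGraph.edist_triangle
              _ ≤ ((2 * r + 1 : ℕ) : ℕ∞) + ((2 * r + 1 : ℕ) : ℕ∞) :=
                  add_le_add h1 (by rw [SimpleGraph.edist_comm]; exact h2)
              _ = ((4 * r + 2 : ℕ) : ℕ∞) := hcast
          exact hPX.2 u (Finset.mem_filter.mp hu).1 u' (Finset.mem_filter.mp hu').1 hne htri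
        calc (X.filter (fun u => φ u vb)).card
            ≤ Finset.univ.card := Finset.card_le_card_of_injOn f (fun _ _ => Finset.mem_univ _) hinj
          _ = k := by simp
      calc ∑ u ∈ X, (A u).card
          = ∑ u ∈ X, ∑ vb ∈ Γ, if φ u vb then 1 else 0 := by
            refine Finset.sum_congr rfl fun u _ => ?_
            show (Γ.filter (φ u)).card = _
            rw [Finset.card_filter]
        _ = ∑ vb ∈ Γ, ∑ u ∈ X, if φ u vb then 1 else 0 := Finset.sum_comm
        _ = ∑ vb ∈ Γ, (X.filter (fun u => φ u vb)).card := by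
            refine Finset.sum_congr rfl fun vb _ => ?_
            rw [Finset.card_filter]
        _ ≤ ∑ _vb ∈ Γ, k := Finset.sum_le_sum step
        _ = Γ.card * k := by rw [Finset.sum_const, smul_eq_mul]
    have hlow : (X.card : ℝ) * t ≤ ∑ u ∈ X, ((A u).card : ℝ) := by
      have := Finset.card_nsmul_le_sum X (fun u => ((A u).card : ℝ)) t hPX.1
      simpa [nsmul_eq_mul] using this
    have hup : (∑ u ∈ X, ((A u).card : ℝ)) ≤ (Γ.card : ℝ) * k := by
      exact_mod_cast hsum_nat
    have hmain : (X.card : ℝ) * t ≤ (Γ.card : ℝ) * k := hlow.trans hup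
    rw [ht] at hmain
    rw [le_div_iff₀ hε]
    have hls' : ((l:ℝ) * s) ≠ 0 := ne_of_gt hls
    have key : ((X.card:ℝ) * ε) * Γ.card ≤ ((k:ℝ) * l * s) * Γ.card := by
      calc ((X.card:ℝ) * ε) * Γ.card
          = ((X.card:ℝ) * (ε / ((l:ℝ) * s) * Γ.card)) * ((l:ℝ) * s) := by
            field_simp
        _ ≤ ((Γ.card:ℝ) * k) * ((l:ℝ) * s) :=
            mul_le_mul_of_nonneg_right hmain hls.le
        _ = ((k:ℝ) * l * s) * Γ.card := by ring
    exact le_of_mul_le_mul_right key hΓpos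
  · intro u hu
    rw [hA u]
    by_contra hcon
    push_neg at hcon
    have huX : u ∉ X := by
      intro h
      exact hu u h (by simp [SimpleGraph.edist_self])
    have hP' : P (insert u X) := by
      constructor
      · intro x hx
        rcases Finset.mem_insert.mp hx with rfl | hx
        · exact hcon
        · exact hPX.1 x hx
      · intro x hx y hy hne h
        rcases Finset.mem_insert.mp hx with hx1 | hx1
        · rcases Finset.mem_insert.mp hy with hy1 | hy1
          · exact hne (hx1.trans hy1.symm)
          · subst hx1; exact hu y hy1 h
        · rcases Finset.mem_insert.mp hy with hy1 | hy1
          · subst hy1; rw [SimpleGraph.edist_comm] at h; exact hu x hx1 h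
          · exact hPX.2 x hx1 y hy1 hne h
    have := hmax (insert u X) (Finset.mem_filter.mpr ⟨Finset.mem_powerset.mpr (Finset.subset_univ _), hP'⟩)
    rw [Finset.card_insert_of_notMem huX] at this
    omega
end

section
/- Let G be a finite graph, let r, s ≥ 1, and suppose Splitter has a winning strategy for the (r,s)-splitter game on G. Then for every subgraph H of G (i.e., V(H) ⊆ V(G) and E(H) ⊆ E(G)), Splitter has a winning strategy for the (r,s)-splitter game on H. -/
/-- `splitterWin r s V G` holds iff Splitter has a winning strategy for the
`(r,s)`-splitter game on `G`: either `G` has no vertices, or `s ≥ 1` and for every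
vertex `v` that Connector may pick, Splitter can answer with some `w` in the
`r`-neighbourhood of `v` such that she wins the `(r, s-1)`-game on the subgraph
induced on `N_r(v) \ {w}`. -/
def splitterWin (r : ℕ) : ℕ → (V : Type) → SimpleGraph V → Prop
  | 0, V, _ => IsEmpty V
  | s + 1, V, G =>
      IsEmpty V ∨ ∀ v : V, ∃ w : V, G.edist w v ≤ (r : ℕ∞) ∧
        splitterWin r s {u : V // G.edist u v ≤ (r : ℕ∞) ∧ u ≠ w}
          (G.induce {u : V | G.edist u v ≤ (r : ℕ∞) ∧ u ≠ w})

private lemma edist_map_le {V V' : Type} {G : SimpleGraph V} {G' : SimpleGraph V'}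
    (f : V' → V) (hhom : ∀ a b, G'.Adj a b → G.Adj (f a) (f b)) (a b : V') :
    G.edist (f a) (f b) ≤ G'.edist a b := by
  rcases eq_or_ne (G'.edist a b) ⊤ with h | h
  · simp [h]
  · obtain ⟨p, hp⟩ := SimpleGraph.exists_walk_of_edist_ne_top h
    calc G.edist (f a) (f b) ≤ (p.map ⟨f, fun h => hhom _ _ h⟩).length :=
          SimpleGraph.edist_le _
      _ = G'.edist a b := by rw [SimpleGraph.Walk.length_map]; exact_mod_cast hp

private lemma splitterWin_mono (r : ℕ) : ∀ (s : ℕ) (V V' : Type) (G : SimpleGraph V)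
    (G' : SimpleGraph V') (f : V' → V), Function.Injective f →
    (∀ a b, G'.Adj a b → G.Adj (f a) (f b)) → splitterWin r s V G →
    splitterWin r s V' G' := by
  intro s
  induction s with
  | zero =>
    intro V V' G G' f hf hhom h
    rw [splitterWin] at h ⊢
    exact ⟨fun v' => h.1 (f v')⟩
  | succ s ih =>
    intro V V' G G' f hf hhom h
    rw [splitterWin] at h ⊢
    rcases h with h | h
    · exact Or.inl ⟨fun v' => h.1 (f v')⟩
    · refine Or.inr fun v' => ?_
      obtain ⟨w, hw, hwin⟩ := h (f v')
      by_cases hcase : ∃ w' : V', f w' = w ∧ G'.edist w' v' ≤ (r : ℕ∞)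
      · obtain ⟨w', hw'1, hw'2⟩ := hcase
        refine ⟨w', hw'2, ?_⟩
        refine ih _ _ _ _
          (fun u => (⟨f u.1, le_trans (edist_map_le f hhom u.1 v') u.2.1,
            fun hc => u.2.2 (hf (hw'1 ▸ hc))⟩ :
            {x : V // G.edist x (f v') ≤ (r : ℕ∞) ∧ x ≠ w}))
          ?_ ?_ hwin
        · intro a b hab
          exact Subtype.ext (hf (congrArg Subtype.val hab))
        · intro a b hab
          exact hhom _ _ hab
      · push_neg at hcase
        refine ⟨v', by simp, ?_⟩
        refine ih _ _ _ _
          (fun u => (⟨f u.1, le_trans (edist_map_le f hhom u.1 v') u.2.1,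
            fun hc => (hcase u.1 hc).not_ge u.2.1⟩ :
            {x : V // G.edist x (f v') ≤ (r : ℕ∞) ∧ x ≠ w}))
          ?_ ?_ hwin
        · intro a b hab
          exact Subtype.ext (hf (congrArg Subtype.val hab))
        · intro a b hab
          exact hhom _ _ hab

/-- If Splitter wins the `(r,s)`-splitter game on a finite graph `G`,
then she wins the `(r,s)`-splitter game on every subgraph `H` of `G`. -/
theorem stmt_11 {V : Type} [Fintype V] (G : SimpleGraph V) (r s : ℕ)
    (hr : 1 ≤ r) (hs : 1 ≤ s) (hwin : splitterWin r s V G) (H : G.Subgraph) :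
    splitterWin r s H.verts H.coe := by
  exact splitterWin_mono r s V H.verts G H.coe Subtype.val Subtype.val_injective
    (fun a b hab => H.adj_sub hab) hwin
end

section
/- Let G be a finite graph and r, s ≥ 1. If Splitter has a winning strategy for the (r,s)-splitter game on G, then Splitter has a winning strategy for the modified (r,s)-splitter game on G, in which in each round Connector picks both a vertex v of the current graph G_i and a radius r' ≤ r, Splitter answers with a vertex w ∈ N_{r'}^{G_i}(v), and the game continues on G_{i+1} = G_i[N_{r'}^{G_i}(v) ∖ {w}], with Splitter winning a play as soon as the current graph is empty within s rounds. -/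
/-- Splitter's winning condition for the modified `(r,s)`-splitter game, in which in each
round Connector picks a vertex `v` of the current graph together with a radius `r' ≤ r`,
Splitter answers with a vertex `w ∈ N_{r'}(v)`, and the game continues on the subgraph
induced on `N_{r'}(v) \ {w}`. -/
def splitterWinMod (r : ℕ) : ℕ → (V : Type) → SimpleGraph V → Prop
  | 0, V, _ => IsEmpty V
  | s + 1, V, G =>
      IsEmpty V ∨ ∀ (v : V) (r' : ℕ), r' ≤ r →
        ∃ w : V, G.edist w v ≤ (r' : ℕ∞) ∧
          splitterWinMod r s {u : V // G.edist u v ≤ (r' : ℕ∞) ∧ u ≠ w}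
            (G.induce {u : V | G.edist u v ≤ (r' : ℕ∞) ∧ u ≠ w})


open SimpleGraph in
private lemma edist_hom_le' {V V' : Type} {G : SimpleGraph V} {G' : SimpleGraph V'}
    (f : G →g G') (u v : V) : G'.edist (f u) (f v) ≤ G.edist u v := by
  rw [SimpleGraph.edist_eq_sInf (G := G)]
  refine le_sInf ?_
  rintro _ ⟨p, rfl⟩
  simpa using (SimpleGraph.edist_le (p.map f))

/-- Lift a graph embedding to induced subgraphs. -/
private def embLift' {V V' : Type} {G : SimpleGraph V} {G' : SimpleGraph V'}
    (f : G' ↪g G) (A' : Set V') (A : Set V) (h : ∀ u' ∈ A', f u' ∈ A) :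
    (G'.induce A') ↪g (G.induce A) where
  toFun := fun u' => ⟨f u'.val, h _ u'.2⟩
  inj' := fun a b hab => Subtype.ext (f.injective (congrArg Subtype.val hab))
  map_rel_iff' := f.map_rel_iff'

private lemma win_embed' (r : ℕ) : ∀ (s : ℕ) {V V' : Type} {G : SimpleGraph V}
    {G' : SimpleGraph V'} (f : G' ↪g G), splitterWin r s V G → splitterWin r s V' G'
  | 0, V, V', G, G', f, h => @Function.isEmpty _ _ h f
  | s + 1, V, V', G, G', f, h => by
    rcases h with h | h
    · exact Or.inl (@Function.isEmpty _ _ h f)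
    · refine Or.inr fun v' => ?_
      obtain ⟨w, hw, hwin⟩ := h (f v')
      by_cases hc : ∃ w' : V', f w' = w ∧ G'.edist w' v' ≤ (r : ℕ∞)
      · obtain ⟨w', hfw', hw'⟩ := hc
        refine ⟨w', hw', ?_⟩
        refine win_embed' r s (embLift' f _ _ ?_) hwin
        rintro u' ⟨h1, h2⟩
        refine ⟨(edist_hom_le' f.toHom u' v').trans h1, ?_⟩
        rw [← hfw']
        exact fun he => h2 (f.injective he)
      · refine ⟨v', by simp, ?_⟩
        refine win_embed' r s (embLift' f _ _ ?_) hwin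
        rintro u' ⟨h1, _⟩
        refine ⟨(edist_hom_le' f.toHom u' v').trans h1, fun he => hc ⟨u', he, h1⟩⟩

private lemma win_mod' (r : ℕ) : ∀ (s : ℕ) (V : Type) (G : SimpleGraph V),
    splitterWin r s V G → splitterWinMod r s V G
  | 0, V, G, h => h
  | s + 1, V, G, h => by
    rcases h with h | h
    · exact Or.inl h
    · refine Or.inr fun v r' hr' => ?_
      obtain ⟨w, hw, hwin⟩ := h v
      have hrr : (r' : ℕ∞) ≤ (r : ℕ∞) := by exact_mod_cast hr'
      by_cases hc : G.edist w v ≤ (r' : ℕ∞)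
      · refine ⟨w, hc, win_mod' r s _ _ ?_⟩
        refine win_embed' r s (embLift' (SimpleGraph.Embedding.refl) _ _ ?_) hwin
        rintro u ⟨h1, h2⟩
        exact ⟨h1.trans hrr, h2⟩
      · refine ⟨v, by simp, win_mod' r s _ _ ?_⟩
        refine win_embed' r s (embLift' (SimpleGraph.Embedding.refl) _ _ ?_) hwin
        rintro u ⟨h1, _⟩
        exact ⟨h1.trans hrr, fun he => hc (he ▸ h1)⟩

/-- If Splitter wins the `(r,s)`-splitter game on a finite graph `G`,
then she also wins the modified `(r,s)`-splitter game on `G`, where Connector additionally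
picks a radius `r' ≤ r` in each round. -/
theorem stmt_12 {V : Type} [Fintype V] (G : SimpleGraph V) (r s : ℕ)
    (hr : 1 ≤ r) (hs : 1 ≤ s) (hwin : splitterWin r s V G) :
    splitterWinMod r s V G := by
  exact win_mod' r s V G hwin
end
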